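/- Let d ≥ 2 and the Shapley kernel weights μ_i = (d−1)/(C(d,i)·i·(d−i)) for 1 ≤ i ≤ d−1, μ_d = 0, with cumulative weights μ̄_p = Σ_{i=p}^{d} C(d−p, i−p) μ_i and D^p_q = Σ_{j=0}^{q} C(q,j)(−1)^j μ̄_{p+j}. Then for all p, q ≥ 1 with p+q ≤ d, D^p_q = (d−1)/(d·q·C(p+q−1, p−1)). -/

import Mathlib

open Finset Nat

private lemma cast_add_choose' (i j : ℕ) :
    (((i + j).choose j : ℕ) : ℝ) = ((i + j)! : ℝ) / ((j)! * (i)!) := by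
  rw [Nat.cast_choose ℝ (Nat.le_add_left j i), Nat.add_sub_cancel]

private lemma hockey (a : ℕ) : ∀ n, ∑ k ∈ range (n + 1), (a + k).choose k = (a + n + 1).choose n := by
  intro n
  induction n with
  | zero => simp
  | succ n ih =>
    rw [Finset.sum_range_succ, ih, show a + (n + 1) = a + n + 1 from by ring,
      show a + n + 1 + 1 = (a + n + 1) + 1 from rfl]
    exact (Nat.choose_succ_succ (a + n + 1) n).symm

private lemma shapley_term (a k m : ℕ) :
    (((k + m).choose k : ℕ) : ℝ) *
      ((((a + k + m + 2 : ℕ) : ℝ) - 1) /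
        ((((a + k + m + 2).choose (a + k + 1) : ℕ) : ℝ) * ((a + k + 1 : ℕ) : ℝ) *
          (((a + k + m + 2 : ℕ) : ℝ) - ((a + k + 1 : ℕ) : ℝ)))) =
    ((((a + k + m + 2 : ℕ) : ℝ) - 1) / (((a + k + m + 2 : ℕ) : ℝ) * ((a + 1 : ℕ) : ℝ))) *
      ((((a + k).choose k : ℕ) : ℝ) / (((a + k + m + 1).choose (k + m) : ℕ) : ℝ)) := by
  have h1 : (((k + m).choose k : ℕ) : ℝ) = ((k + m)! : ℝ) / ((k)! * (m)!) := by
    rw [show k + m = m + k from by ring] at *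
    rw [cast_add_choose' m k, show m + k = k + m from by ring]
  have h2 : (((a + k + m + 2).choose (a + k + 1) : ℕ) : ℝ)
      = ((a + k + m + 2)! : ℝ) / ((a + k + 1)! * (m + 1)!) := by
    rw [show a + k + m + 2 = (m + 1) + (a + k + 1) from by ring, cast_add_choose',
      show (m + 1) + (a + k + 1) = a + k + m + 2 from by ring]
  have h3 : (((a + k + m + 1).choose (k + m) : ℕ) : ℝ)
      = ((a + k + m + 1)! : ℝ) / ((k + m)! * (a + 1)!) := by
    rw [show a + k + m + 1 = (a + 1) + (k + m) from by ring, cast_add_choose',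
      show (a + 1) + (k + m) = a + k + m + 1 from by ring]
  have h4 : (((a + k).choose k : ℕ) : ℝ) = ((a + k)! : ℝ) / ((k)! * (a)!) := cast_add_choose' a k
  have e1 : (a + k + m + 2)! = (a + k + m + 2) * (a + k + m + 1)! := Nat.factorial_succ _
  have e2 : (a + k + 1)! = (a + k + 1) * (a + k)! := Nat.factorial_succ _
  have e3 : (m + 1)! = (m + 1) * (m)! := Nat.factorial_succ _
  have e4 : (a + 1)! = (a + 1) * (a)! := Nat.factorial_succ _
  have ne : ∀ n : ℕ, ((n ! : ℕ) : ℝ) ≠ 0 := fun n => by positivity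
  have hsub : (((a + k + m + 2 : ℕ) : ℝ) - ((a + k + 1 : ℕ) : ℝ)) = ((m + 1 : ℕ) : ℝ) := by
    push_cast; ring
  rw [h1, h2, h3, h4, hsub, e1, e2, e3, e4]
  have hk := ne k; have hm := ne m; have ha := ne a
  have hkm := ne (k + m); have hak := ne (a + k); have hakm := ne (a + k + m + 1)
  field_simp
  push_cast
  ring

private lemma T_rec (c dR : ℝ) (a q : ℕ) (hq : q ≠ 0) (hdR : dR ≠ 0) :
    c / (dR * (q : ℝ) * (((a + q).choose a : ℕ) : ℝ))
      - c / (dR * (q : ℝ) * (((a + q + 1).choose (a + 1) : ℕ) : ℝ))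
    = c / (dR * ((q : ℝ) + 1) * (((a + q + 1).choose a : ℕ) : ℝ)) := by
  have h1 : (((a + q).choose a : ℕ) : ℝ) = ((a + q)! : ℝ) / ((a)! * (q)!) := by
    rw [show a + q = q + a from by ring, cast_add_choose', show q + a = a + q from by ring]
  have h2 : (((a + q + 1).choose (a + 1) : ℕ) : ℝ) = ((a + q + 1)! : ℝ) / ((a + 1)! * (q)!) := by
    rw [show a + q + 1 = q + (a + 1) from by ring, cast_add_choose',
      show q + (a + 1) = a + q + 1 from by ring]
  have h3 : (((a + q + 1).choose a : ℕ) : ℝ) = ((a + q + 1)! : ℝ) / ((a)! * (q + 1)!) := by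
    rw [show a + q + 1 = (q + 1) + a from by ring, cast_add_choose',
      show (q + 1) + a = a + q + 1 from by ring]
  have e1 : (a + q + 1)! = (a + q + 1) * (a + q)! := Nat.factorial_succ _
  have e2 : (a + 1)! = (a + 1) * (a)! := Nat.factorial_succ _
  have e3 : (q + 1)! = (q + 1) * (q)! := Nat.factorial_succ _
  have ne : ∀ n : ℕ, ((n ! : ℕ) : ℝ) ≠ 0 := fun n => by positivity
  have ha := ne a; have hqf := ne q; have haq := ne (a + q)
  have hq' : (q : ℝ) ≠ 0 := Nat.cast_ne_zero.mpr hq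
  have hq1 : (q : ℝ) + 1 ≠ 0 := by positivity
  have haq1 : ((a : ℝ) + q + 1) ≠ 0 := by positivity
  rw [h1, h2, h3, e1, e2, e3]
  field_simp
  push_cast
  ring

private lemma pascal_split (f : ℕ → ℝ) (n : ℕ) :
    ∑ j ∈ range (n + 2), (((n + 1).choose j : ℕ) : ℝ) * f j
      = ∑ j ∈ range (n + 1), ((n.choose j : ℕ) : ℝ) * f j
        + ∑ j ∈ range (n + 1), ((n.choose j : ℕ) : ℝ) * f (j + 1) := by
  rw [Finset.sum_range_succ' (fun j => (((n + 1).choose j : ℕ) : ℝ) * f j) (n + 1)]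
  rw [Finset.sum_range_succ' (fun j => ((n.choose j : ℕ) : ℝ) * f j) n]
  simp only [Nat.choose_succ_succ, Nat.choose_zero_right, Nat.cast_one, one_mul, Nat.cast_add,
    add_mul]
  rw [Finset.sum_add_distrib]
  have : ∑ j ∈ range (n + 1), ((n.choose (j + 1) : ℕ) : ℝ) * f (j + 1)
      = ∑ j ∈ range n, ((n.choose (j + 1) : ℕ) : ℝ) * f (j + 1) := by
    rw [Finset.sum_range_succ, Nat.choose_succ_self]
    simp
  rw [this]
  ring

/-- for the Shapley kernel weights,
`D^p_q = (d−1)/(d·q·C(p+q−1,p−1))` for `p,q ≥ 1`, `p+q ≤ d`. -/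
theorem shapley_kernel_D_value (d : ℕ) (hd : 2 ≤ d)
    (μ μbar : ℕ → ℝ) (D : ℕ → ℕ → ℝ)
    (hμ : ∀ i, 1 ≤ i → i ≤ d - 1 →
      μ i = ((d : ℝ) - 1) / ((d.choose i : ℝ) * (i : ℝ) * ((d : ℝ) - (i : ℝ))))
    (hμd : μ d = 0)
    (hbar : ∀ p, 1 ≤ p → p ≤ d →
      μbar p = ∑ i ∈ Finset.Icc p d, ((d - p).choose (i - p) : ℝ) * μ i)
    (hD : ∀ p q, 1 ≤ p → p + q ≤ d →
      D p q = ∑ j ∈ Finset.range (q + 1), (q.choose j : ℝ) * (-1) ^ j * μbar (p + j)) :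
    ∀ p q, 1 ≤ p → 1 ≤ q → p + q ≤ d →
      D p q = ((d : ℝ) - 1) / ((d : ℝ) * (q : ℝ) * ((p + q - 1).choose (p - 1) : ℝ)) := by
  have hd0 : (d : ℝ) ≠ 0 := by positivity
  -- Pascal recurrence for D
  have hrec : ∀ p n, 1 ≤ p → p + n + 1 ≤ d → D p (n + 1) = D p n - D (p + 1) n := by
    intro p n hp h
    rw [hD p (n + 1) hp (by omega), hD p n hp (by omega), hD (p + 1) n (by omega) (by omega)]
    simp only [mul_assoc]
    rw [pascal_split (fun j => (-1) ^ j * μbar (p + j)) n]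
    have hB : ∑ j ∈ range (n + 1), ((n.choose j : ℕ) : ℝ) * ((-1) ^ (j + 1) * μbar (p + (j + 1)))
        = - ∑ j ∈ range (n + 1), ((n.choose j : ℕ) : ℝ) * ((-1) ^ j * μbar (p + 1 + j)) := by
      rw [← Finset.sum_neg_distrib]
      refine Finset.sum_congr rfl fun j _ => ?_
      rw [show p + (j + 1) = p + 1 + j from by ring]
      ring
    rw [hB]
    ring
  -- telescoping of cumulative weights
  have tele : ∀ p, 1 ≤ p → p + 1 ≤ d →
      μbar p - μbar (p + 1) = ∑ i ∈ Icc p d, (((d - p - 1).choose (i - p) : ℕ) : ℝ) * μ i := by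
    intro p hp hpd
    rw [hbar p hp (by omega), hbar (p + 1) (by omega) (by omega),
      show Finset.Icc (p + 1) d = Finset.Ioc p d from Finset.Icc_add_one_left_eq_Ioc p d,
      Finset.Icc_eq_cons_Ioc (show p ≤ d by omega), Finset.sum_cons, Finset.sum_cons]
    simp only [Nat.sub_self, Nat.choose_zero_right, Nat.cast_one, one_mul]
    rw [add_sub_assoc]
    congr 1
    rw [← Finset.sum_sub_distrib]
    refine Finset.sum_congr rfl fun i hi => ?_
    rw [Finset.mem_Ioc] at hi
    have hc : (d - p).choose (i - p) = (d - (p + 1)).choose (i - (p + 1)) + (d - p - 1).choose (i - p) := by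
      set n := d - p - 1 with hn
      set k := i - p - 1 with hk
      rw [show d - (p + 1) = n from by omega, show i - (p + 1) = k from by omega,
        show d - p = n + 1 from by omega, show i - p = k + 1 from by omega]
      exact Nat.choose_succ_succ n k
    rw [hc]
    push_cast
    ring
  -- the base-case sum
  have hbase : ∀ p, 1 ≤ p → p + 1 ≤ d →
      ∑ i ∈ Icc p d, (((d - p - 1).choose (i - p) : ℕ) : ℝ) * μ i
        = ((d : ℝ) - 1) / ((d : ℝ) * (p : ℝ)) := by
    intro p hp hpd
    have h0 := Finset.sum_Icc_succ_top (show p ≤ (d - 1) + 1 from by omega)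
      (fun i => (((d - p - 1).choose (i - p) : ℕ) : ℝ) * μ i)
    rw [show (d - 1) + 1 = d from by omega] at h0
    rw [h0, hμd, mul_zero, add_zero, ← Finset.Ico_add_one_right_eq_Icc, Finset.sum_Ico_eq_sum_range,
      show d - 1 + 1 - p = d - p from by omega]
    have hterm : ∀ k ∈ range (d - p), (((d - p - 1).choose (p + k - p) : ℕ) : ℝ) * μ (p + k)
        = (((d : ℝ) - 1) / ((d : ℝ) * (p : ℝ)))
            * ((((p - 1 + k).choose k : ℕ) : ℝ) / (((d - 1).choose (d - p - 1) : ℕ) : ℝ)) := by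
      intro k hk
      rw [Finset.mem_range] at hk
      rw [hμ (p + k) (by omega) (by omega)]
      obtain ⟨a, rfl⟩ : ∃ a, p = a + 1 := ⟨p - 1, by omega⟩
      obtain ⟨m, hm⟩ : ∃ m, d = a + k + m + 2 := ⟨d - a - k - 2, by omega⟩
      subst hm
      rw [show a + 1 + k - (a + 1) = k from by omega,
        show a + k + m + 2 - (a + 1) - 1 = k + m from by omega,
        show a + 1 + k = a + k + 1 from by omega,
        show a + k + m + 2 - 1 = a + k + m + 1 from by omega,
        show a + 1 - 1 = a from by omega,
        show a + k + m + 1 = a + k + m + 1 from rfl]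
      exact shapley_term a k m
    rw [Finset.sum_congr rfl hterm, ← Finset.mul_sum, ← Finset.sum_div]
    have hsum : ∑ k ∈ range (d - p), (((p - 1 + k).choose k : ℕ) : ℝ)
        = (((d - 1).choose (d - p - 1) : ℕ) : ℝ) := by
      rw [← Nat.cast_sum]
      norm_cast
      set n := d - p - 1 with hn
      rw [show d - p = n + 1 from by omega, show d - 1 = p - 1 + n + 1 from by omega]
      exact hockey (p - 1) n
    rw [hsum, div_self, mul_one]
    exact Nat.cast_ne_zero.mpr (Nat.choose_pos (by omega)).ne'
  -- main induction
  have main : ∀ n p, 1 ≤ p → p + n + 1 ≤ d →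
      D p (n + 1) = ((d : ℝ) - 1) / ((d : ℝ) * ((n + 1 : ℕ) : ℝ)
        * (((p + (n + 1) - 1).choose (p - 1) : ℕ) : ℝ)) := by
    intro n
    induction n with
    | zero =>
      intro p hp h
      have h1 : D p 1 = μbar p - μbar (p + 1) := by
        rw [hD p 1 hp (by omega)]
        norm_num [Finset.sum_range_succ]
        ring
      simp only [zero_add]
      rw [h1, tele p hp (by omega), hbase p hp (by omega)]
      have hc : (p + 1 - 1).choose (p - 1) = p := by
        obtain ⟨a, rfl⟩ : ∃ a, p = a + 1 := ⟨p - 1, by omega⟩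
        simp [Nat.choose_succ_self_right]
      rw [hc]
      norm_num
    | succ n ih =>
      intro p hp h
      rw [hrec p (n + 1) hp (by omega), ih p hp (by omega), ih (p + 1) (by omega) (by omega)]
      obtain ⟨a, rfl⟩ : ∃ a, p = a + 1 := ⟨p - 1, by omega⟩
      rw [show a + 1 + (n + 1) - 1 = a + (n + 1) from by omega,
        show a + 1 - 1 = a from by omega,
        show a + 1 + 1 + (n + 1) - 1 = a + (n + 1) + 1 from by omega,
        show a + 1 + 1 - 1 = a + 1 from by omega,
        show a + 1 + (n + 1 + 1) - 1 = a + (n + 1) + 1 from by omega,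
        show ((n + 1 + 1 : ℕ) : ℝ) = ((n + 1 : ℕ) : ℝ) + 1 from by push_cast; ring]
      exact T_rec ((d : ℝ) - 1) (d : ℝ) a (n + 1) (by omega) hd0
  intro p q hp hq hpq
  obtain ⟨n, rfl⟩ : ∃ n, q = n + 1 := ⟨q - 1, by omega⟩
  exact main n p hp (by omega)
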